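/- Let X, Y be real Banach spaces and F : B_X → B_Y a non-expansive bijection. If F(x) is an extreme point of B_Y, then F(a·x) = a·F(x) for all a ∈ (−1, 1). -/

import Mathlib

section Aux

variable {X Y : Type*} [NormedAddCommGroup X] [NormedSpace ℝ X]
  [NormedAddCommGroup Y] [NormedSpace ℝ Y]

lemma aux_norm_le (u : Metric.closedBall (0 : X) 1) : ‖(u : X)‖ ≤ 1 := by
  exact mem_closedBall_zero_iff.mp u.2

lemma aux_mem {u : X} (h : ‖u‖ ≤ 1) : u ∈ Metric.closedBall (0 : X) 1 := by
  simpa [Metric.mem_closedBall, dist_zero_right] using h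

lemma aux_zero_mem : (0 : X) ∈ Metric.closedBall (0 : X) 1 := aux_mem (by simp)

lemma aux_F_zero (F : Metric.closedBall (0 : X) 1 → Metric.closedBall (0 : Y) 1)
    (hsurj : Function.Surjective F)
    (hne : ∀ u v : Metric.closedBall (0 : X) 1,
      ‖(F u : Y) - (F v : Y)‖ ≤ ‖(u : X) - (v : X)‖) :
    (F ⟨0, aux_zero_mem⟩ : Y) = 0 := by
  set y₀ : Y := (F ⟨0, aux_zero_mem⟩ : Y) with hy₀
  by_contra h
  have hy₀pos : 0 < ‖y₀‖ := norm_pos_iff.2 h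
  have hz : ‖(-(‖y₀‖⁻¹ • y₀) : Y)‖ ≤ 1 := by
    rw [norm_neg, norm_smul, norm_inv, norm_norm, inv_mul_cancel₀ hy₀pos.ne']
  obtain ⟨u, hu⟩ := hsurj ⟨_, aux_mem hz⟩
  have h1 : ‖(F u : Y) - y₀‖ ≤ ‖(u : X) - (0 : X)‖ := hne u ⟨0, aux_zero_mem⟩
  have hFu : (F u : Y) = -(‖y₀‖⁻¹ • y₀) := congrArg Subtype.val hu
  rw [hFu, sub_zero] at h1
  have hnorm : ‖-(‖y₀‖⁻¹ • y₀) - y₀‖ = 1 + ‖y₀‖ := by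
    have : -(‖y₀‖⁻¹ • y₀) - y₀ = -((‖y₀‖⁻¹ + 1) • y₀) := by
      rw [add_smul, one_smul, neg_add, sub_eq_add_neg]
    rw [this, norm_neg, norm_smul, Real.norm_eq_abs,
      abs_of_pos (by positivity : (0:ℝ) < ‖y₀‖⁻¹ + 1)]
    field_simp
  have hu1 : ‖(u : X)‖ ≤ 1 := aux_norm_le u
  rw [hnorm] at h1
  linarith

lemma aux_pos (F : Metric.closedBall (0 : X) 1 → Metric.closedBall (0 : Y) 1)
    (hF0 : (F ⟨0, aux_zero_mem⟩ : Y) = 0)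
    (hne : ∀ u v : Metric.closedBall (0 : X) 1,
      ‖(F u : Y) - (F v : Y)‖ ≤ ‖(u : X) - (v : X)‖)
    (x : Metric.closedBall (0 : X) 1)
    (hext : (F x : Y) ∈ Set.extremePoints ℝ (Metric.closedBall (0 : Y) 1))
    {a : ℝ} (ha0 : 0 < a) (ha1 : a < 1)
    (h : a • (x : X) ∈ Metric.closedBall (0 : X) 1) :
    (F ⟨a • (x : X), h⟩ : Y) = a • (F x : Y) := by
  set y : Y := (F x : Y) with hy
  set u : Y := (F ⟨a • (x : X), h⟩ : Y) with hudef
  have hx1 : ‖(x : X)‖ ≤ 1 := aux_norm_le x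
  have hu : ‖u‖ ≤ a := by
    have h' := hne ⟨a • (x : X), h⟩ ⟨0, aux_zero_mem⟩
    rw [hF0, sub_zero] at h'
    calc ‖u‖ ≤ ‖a • (x : X) - 0‖ := h'
      _ = a * ‖(x : X)‖ := by rw [sub_zero, norm_smul, Real.norm_eq_abs, abs_of_pos ha0]
      _ ≤ a := by nlinarith
  have hyu : ‖y - u‖ ≤ 1 - a := by
    have h' := hne x ⟨a • (x : X), h⟩
    calc ‖y - u‖ ≤ ‖(x : X) - a • (x : X)‖ := h'
      _ = (1 - a) * ‖(x : X)‖ := by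
          rw [show (x : X) - a • (x : X) = (1 - a) • (x : X) by rw [sub_smul, one_smul],
            norm_smul, Real.norm_eq_abs, abs_of_pos (by linarith)]
      _ ≤ 1 - a := by nlinarith
  have hz₁ : a⁻¹ • u ∈ Metric.closedBall (0 : Y) 1 := aux_mem (by
    rw [norm_smul, Real.norm_eq_abs, abs_of_pos (inv_pos.2 ha0)]
    rw [inv_mul_le_iff₀ ha0]
    linarith)
  have hz₂ : (1 - a)⁻¹ • (y - u) ∈ Metric.closedBall (0 : Y) 1 := aux_mem (by
    rw [norm_smul, Real.norm_eq_abs, abs_of_pos (inv_pos.2 (by linarith : (0:ℝ) < 1 - a))]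
    rw [inv_mul_le_iff₀ (by linarith : (0:ℝ) < 1 - a)]
    linarith)
  have hseg : y ∈ openSegment ℝ (a⁻¹ • u) ((1 - a)⁻¹ • (y - u)) := by
    refine ⟨a, 1 - a, ha0, by linarith, by ring, ?_⟩
    rw [smul_smul, smul_smul, mul_inv_cancel₀ ha0.ne',
      mul_inv_cancel₀ (by linarith : (1:ℝ) - a ≠ 0), one_smul, one_smul]
    abel
  have hkey := hext.2 hz₁ hz₂ hseg
  calc u = a • (a⁻¹ • u) := by rw [smul_smul, mul_inv_cancel₀ ha0.ne', one_smul]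
    _ = a • y := by rw [hkey]

lemma aux_neg_extreme {y : Y}
    (h : y ∈ Set.extremePoints ℝ (Metric.closedBall (0 : Y) 1)) :
    -y ∈ Set.extremePoints ℝ (Metric.closedBall (0 : Y) 1) := by
  constructor
  · exact aux_mem (by rw [norm_neg]; exact aux_norm_le ⟨y, h.1⟩)
  · rintro z₁ hz₁ z₂ hz₂ ⟨a, b, ha, hb, hab, habz⟩
    have hz₁' : -z₁ ∈ Metric.closedBall (0 : Y) 1 :=
      aux_mem (by rw [norm_neg]; exact aux_norm_le ⟨z₁, hz₁⟩)
    have hz₂' : -z₂ ∈ Metric.closedBall (0 : Y) 1 :=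
      aux_mem (by rw [norm_neg]; exact aux_norm_le ⟨z₂, hz₂⟩)
    have hseg : y ∈ openSegment ℝ (-z₁) (-z₂) :=
      ⟨a, b, ha, hb, hab, by rw [smul_neg, smul_neg, ← neg_add, habz, neg_neg]⟩
    have e₁ := h.2 hz₁' hz₂' hseg
    rw [← neg_neg z₁, e₁]

end Aux

theorem nonexpansive_bijection_extreme_point_ray
    {X Y : Type*} [NormedAddCommGroup X] [NormedSpace ℝ X] [CompleteSpace X]
    [NormedAddCommGroup Y] [NormedSpace ℝ Y] [CompleteSpace Y]
    (F : Metric.closedBall (0 : X) 1 → Metric.closedBall (0 : Y) 1)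
    (hbij : Function.Bijective F)
    (hne : ∀ u v : Metric.closedBall (0 : X) 1,
      ‖(F u : Y) - (F v : Y)‖ ≤ ‖(u : X) - (v : X)‖)
    (x : Metric.closedBall (0 : X) 1)
    (hext : (F x : Y) ∈ Set.extremePoints ℝ (Metric.closedBall (0 : Y) 1)) :
    ∀ a ∈ Set.Ioo (-1 : ℝ) 1, ∀ (ha : a • (x : X) ∈ Metric.closedBall (0 : X) 1),
      (F ⟨a • (x : X), ha⟩ : Y) = a • (F x : Y) := by
  have hF0 := aux_F_zero F hbij.2 hne
  rintro a ⟨haL, haR⟩ ha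
  rcases lt_trichotomy a 0 with hneg | rfl | hpos
  · -- negative a : first show F⁻¹(-F x) = -x
    have hFx1 : ‖(F x : Y)‖ ≤ 1 := aux_norm_le (F x)
    obtain ⟨v, hv⟩ := hbij.2 ⟨-(F x : Y), aux_mem (by rw [norm_neg]; exact hFx1)⟩
    have hvy : (F v : Y) = -(F x : Y) := congrArg Subtype.val hv
    have hx1 : ‖(x : X)‖ ≤ 1 := aux_norm_le x
    have hv1 : ‖(v : X)‖ ≤ 1 := aux_norm_le v
    have hmmem : ((2:ℝ)⁻¹ • ((x : X) + v)) ∈ Metric.closedBall (0 : X) 1 := aux_mem (by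
      rw [norm_smul, Real.norm_eq_abs]
      have h2 : ‖(x : X) + v‖ ≤ 2 := le_trans (norm_add_le _ _) (by linarith)
      rw [abs_of_pos (by norm_num : (0:ℝ) < 2⁻¹)]
      linarith)
    set m : Metric.closedBall (0 : X) 1 := ⟨_, hmmem⟩ with hm
    have h1 : ‖(F m : Y) - F x‖ ≤ 1 := by
      refine le_trans (hne m x) ?_
      have heq : (m : X) - (x : X) = (2:ℝ)⁻¹ • ((v : X) - x) := by
        show (2:ℝ)⁻¹ • ((x : X) + v) - (x : X) = _
        module
      rw [heq, norm_smul, Real.norm_eq_abs, abs_of_pos (by norm_num : (0:ℝ) < 2⁻¹)]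
      have : ‖(v : X) - x‖ ≤ 2 := le_trans (norm_sub_le _ _) (by linarith)
      linarith
    have h2 : ‖(F m : Y) + F x‖ ≤ 1 := by
      have h' := hne m v
      rw [hvy, sub_neg_eq_add] at h'
      refine le_trans h' ?_
      have heq : (m : X) - (v : X) = (2:ℝ)⁻¹ • ((x : X) - v) := by
        show (2:ℝ)⁻¹ • ((x : X) + v) - (v : X) = _
        module
      rw [heq, norm_smul, Real.norm_eq_abs, abs_of_pos (by norm_num : (0:ℝ) < 2⁻¹)]
      have : ‖(x : X) - v‖ ≤ 2 := le_trans (norm_sub_le _ _) (by linarith)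
      linarith
    have hseg : (F x : Y) ∈ openSegment ℝ ((F m : Y) + F x) ((F x : Y) - F m) :=
      ⟨2⁻¹, 2⁻¹, by norm_num, by norm_num, by norm_num, by module⟩
    have hFm0 : (F m : Y) = 0 := by
      have hk := hext.2 (aux_mem (by rwa [norm_sub_rev] at h1 : ‖(F x : Y) - F m‖ ≤ 1)) (aux_mem h2) (by rwa [openSegment_symm] at hseg)
      -- hk : (F x : Y) - F m = F x
      have := sub_eq_self.mp hk
      exact this
    have hm0 : (m : X) = 0 := by
      have hFeq : F m = F ⟨0, aux_zero_mem⟩ := Subtype.ext (by rw [hFm0, hF0])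
      have := hbij.1 hFeq
      exact congrArg Subtype.val this
    have hvx : (v : X) = -(x : X) := by
      have h0 : (2:ℝ)⁻¹ • ((x : X) + v) = 0 := hm0
      have h0' : (x : X) + v = 0 := by
        have := congrArg (fun z => (2:ℝ) • z) h0
        simpa [smul_smul] using this
      exact eq_neg_of_add_eq_zero_right h0'
    -- apply positive case to v with coefficient -a
    have hext' : (F v : Y) ∈ Set.extremePoints ℝ (Metric.closedBall (0 : Y) 1) := by
      rw [hvy]; exact aux_neg_extreme hext
    have hax : a • (x : X) = (-a) • (v : X) := by rw [hvx]; module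
    have ha' : (-a) • (v : X) ∈ Metric.closedBall (0 : X) 1 := hax ▸ ha
    have hres := aux_pos F hF0 hne v hext' (neg_pos.2 hneg) (by linarith) ha'
    have heq : (⟨a • (x : X), ha⟩ : Metric.closedBall (0 : X) 1)
        = ⟨(-a) • (v : X), ha'⟩ := Subtype.ext hax
    rw [heq, hres, hvy, smul_neg, neg_smul, neg_neg]
  · -- a = 0
    have heq : (⟨(0:ℝ) • (x : X), ha⟩ : Metric.closedBall (0 : X) 1)
        = ⟨0, aux_zero_mem⟩ := Subtype.ext (by simp)
    rw [heq, hF0, zero_smul]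
  · exact aux_pos F hF0 hne x hext hpos haR ha
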